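/- arXiv:2512.24919 — 3 statements merged into one kernel-verified Lean document; each statement's English description precedes it below -/
import Mathlib

section
/- Let G be a residually finite group that is word hyperbolic (Gromov hyperbolic). Then G has a finite-index subgroup that is torsion free. -/
/-- The word metric on a group `G` associated to a generating set `S`:
the distance from `g` to `h` is the least length of a word in `S ∪ S⁻¹`
representing `g⁻¹ * h` (as a real number). -/
noncomputable def wordDist {G : Type*} [Group G] (S : Set G) (g h : G) : ℝ :=
  sInf {r : ℝ | ∃ l : List G, (∀ x ∈ l, x ∈ S ∨ x⁻¹ ∈ S) ∧ l.prod = g⁻¹ * h ∧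
    r = l.length}

/-- A group is word hyperbolic if for some (equivalently, any) finite generating set
its word metric satisfies Gromov's four-point condition for some `δ ≥ 0`. -/
def IsWordHyperbolic (G : Type*) [Group G] : Prop :=
  ∃ (S : Finset G) (δ : ℝ), 0 ≤ δ ∧ Subgroup.closure (S : Set G) = ⊤ ∧
    ∀ x y z w : G,
      wordDist (S : Set G) x y + wordDist (S : Set G) z w ≤
        max (wordDist (S : Set G) x z + wordDist (S : Set G) y w)
            (wordDist (S : Set G) x w + wordDist (S : Set G) y z) + 2 * δ

/-- A group is residually finite if every nontrivial element survives in some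
finite quotient. -/
def ResiduallyFinite (G : Type*) [Group G] : Prop :=
  ∀ g : G, g ≠ 1 → ∃ H : Subgroup G, H.Normal ∧ H.FiniteIndex ∧ g ∉ H

section Aux

variable {G : Type*} [Group G] {S : Finset G}

private lemma exists_word (hS : Subgroup.closure (S : Set G) = ⊤) (g : G) :
    ∃ n : ℕ, ∃ l : List G,
      (∀ x ∈ l, x ∈ (S : Set G) ∨ x⁻¹ ∈ (S : Set G)) ∧ l.prod = g ∧ l.length = n := by
  have hg : g ∈ (Subgroup.closure (S : Set G)).toSubmonoid := by
    rw [hS]; trivial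
  rw [Subgroup.closure_toSubmonoid] at hg
  obtain ⟨l, hl, hprod⟩ := Submonoid.exists_list_of_mem_closure hg
  refine ⟨l.length, l, fun x hx => ?_, hprod, rfl⟩
  simpa [Set.mem_inv] using hl x hx

open Classical in
/-- The word length of `g` with respect to `S ∪ S⁻¹`. -/
private noncomputable def len (hS : Subgroup.closure (S : Set G) = ⊤) (g : G) : ℕ :=
  Nat.find (exists_word hS g)

private lemma len_spec (hS : Subgroup.closure (S : Set G) = ⊤) (g : G) :
    ∃ l : List G, (∀ x ∈ l, x ∈ (S : Set G) ∨ x⁻¹ ∈ (S : Set G)) ∧ l.prod = g ∧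
      l.length = len hS g := by
  classical
  exact Nat.find_spec (exists_word hS g)

private lemma len_le (hS : Subgroup.closure (S : Set G) = ⊤) {g : G} {l : List G}
    (hl : ∀ x ∈ l, x ∈ (S : Set G) ∨ x⁻¹ ∈ (S : Set G)) (hprod : l.prod = g) :
    len hS g ≤ l.length := by
  classical
  exact Nat.find_le ⟨l, hl, hprod, rfl⟩

private lemma wordDist_eq (hS : Subgroup.closure (S : Set G) = ⊤) (x y : G) :
    wordDist (S : Set G) x y = (len hS (x⁻¹ * y) : ℝ) := by
  obtain ⟨l, hl, hprod, hlen⟩ := len_spec hS (x⁻¹ * y)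
  refine le_antisymm (csInf_le ⟨0, ?_⟩ ⟨l, hl, hprod, by rw [hlen]⟩) (le_csInf ⟨_, l, hl, hprod, by rw [hlen]⟩ ?_)
  · rintro r ⟨l', _, _, rfl⟩
    positivity
  · rintro r ⟨l', hl', hprod', rfl⟩
    exact_mod_cast len_le hS hl' hprod'

/-- Midpoint: a point roughly halfway along a shortest word for `g`. -/
private lemma exists_midpoint (hS : Subgroup.closure (S : Set G) = ⊤) (g : G) :
    ∃ z : G, len hS z ≤ (len hS g + 1) / 2 ∧
      len hS (z⁻¹ * g) ≤ len hS g - (len hS g + 1) / 2 := by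
  obtain ⟨l, hl, hprod, hlen⟩ := len_spec hS g
  set n := len hS g with hn
  set k := (n + 1) / 2 with hk
  refine ⟨(l.take k).prod, ?_, ?_⟩
  · refine (len_le hS (fun x hx => hl x (List.mem_of_mem_take hx)) rfl).trans ?_
    simp [List.length_take]
  · have hg : (l.take k).prod * (l.drop k).prod = g := by
      rw [← List.prod_append, List.take_append_drop, hprod]
    rw [← hg, inv_mul_cancel_left]
    refine (len_le hS (fun x hx => hl x (List.mem_of_mem_drop hx)) rfl).trans ?_
    simp [List.length_drop, hlen]

private lemma finite_words (A : Set G) (hA : A.Finite) :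
    ∀ K : ℕ, {l : List G | l.length ≤ K ∧ ∀ x ∈ l, x ∈ A}.Finite
  | 0 => by
    refine (Set.finite_singleton []).subset ?_
    rintro l ⟨hl, -⟩
    simpa using List.length_eq_zero_iff.mp (Nat.le_zero.mp hl)
  | (K + 1) => by
    have ih := finite_words A hA K
    refine (((hA.image2 List.cons ih)).insert []).subset ?_
    rintro (_ | ⟨a, t⟩) ⟨hlen, hmem⟩
    · exact Set.mem_insert _ _
    · exact Set.mem_insert_iff.mpr <| Or.inr <|
        Set.mem_image2_of_mem (hmem a (by simp))
          ⟨by simpa using hlen, fun x hx => hmem x (by simp [hx])⟩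

private lemma ball_finite (hS : Subgroup.closure (S : Set G) = ⊤) (K : ℕ) :
    {g : G | len hS g ≤ K}.Finite := by
  set A : Set G := (S : Set G) ∪ (S : Set G)⁻¹ with hA
  have hAfin : A.Finite := S.finite_toSet.union S.finite_toSet.inv
  refine ((finite_words A hAfin K).image List.prod).subset ?_
  rintro g hg
  obtain ⟨l, hl, hprod, hlen⟩ := len_spec hS g
  refine ⟨l, ⟨hlen ▸ hg, fun x hx => ?_⟩, hprod⟩
  rcases hl x hx with h | h
  · exact Or.inl h
  · exact Or.inr (by simpa [Set.mem_inv] using h)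

private lemma len_inv_le (hS : Subgroup.closure (S : Set G) = ⊤) (g : G) :
    len hS g⁻¹ ≤ len hS g := by
  obtain ⟨l, hl, hprod, hlen⟩ := len_spec hS g
  refine (len_le hS (l := (l.map (·⁻¹)).reverse) ?_ ?_).trans (by simp [hlen])
  · intro x hx
    simp only [List.mem_reverse, List.mem_map] at hx
    obtain ⟨a, ha, rfl⟩ := hx
    rcases hl a ha with h | h
    · exact Or.inr (by simpa using h)
    · exact Or.inl h
  · rw [← hprod, List.prod_inv_reverse]

/-- Key geometric lemma: any torsion element of a hyperbolic group is conjugate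
to an element of word length at most `4δ + 1`. -/
private lemma conj_bound (hS : Subgroup.closure (S : Set G) = ⊤) {δ : ℝ} (hδ : 0 ≤ δ)
    (h4 : ∀ x y z w : G,
      wordDist (S : Set G) x y + wordDist (S : Set G) z w ≤
        max (wordDist (S : Set G) x z + wordDist (S : Set G) y w)
            (wordDist (S : Set G) x w + wordDist (S : Set G) y z) + 2 * δ)
    {g : G} (hg : IsOfFinOrder g) :
    ∃ x : G, (len hS (x⁻¹ * g * x) : ℝ) ≤ 4 * δ + 1 := by
  have hm : 0 < orderOf g := hg.orderOf_pos
  set m := orderOf g with hmdef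
  have hrne : ∀ x : G, ((Finset.range m).image fun j => len hS (x⁻¹ * g ^ j)).Nonempty :=
    fun x => (Finset.nonempty_range_iff.mpr hm.ne').image _
  set r : G → ℕ := fun x => ((Finset.range m).image fun j => len hS (x⁻¹ * g ^ j)).max' (hrne x)
    with hrdef
  have hr : ∀ x : G, ∀ j : ℕ, len hS (x⁻¹ * g ^ j) ≤ r x := by
    intro x j
    rw [← pow_mod_orderOf]
    exact Finset.le_max' _ _ (Finset.mem_image_of_mem (fun i => len hS (x⁻¹ * g ^ i))
      (Finset.mem_range.mpr (Nat.mod_lt _ hm)))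
  -- choose a point minimizing the radius of the orbit
  obtain ⟨x0, hx0⟩ : ∃ x0 : G, r x0 = sInf (Set.range r) :=
    Nat.sInf_mem (Set.range_nonempty r)
  set r0 : ℕ := sInf (Set.range r) with hr0def
  refine ⟨x0, ?_⟩
  set c : G := x0⁻¹ * g * x0 with hcdef
  set n : ℕ := len hS c with hndef
  set k : ℕ := (n + 1) / 2 with hkdef
  obtain ⟨z', hz1, hz2⟩ := exists_midpoint hS c
  rw [← hndef, ← hkdef] at hz1 hz2
  set z : G := x0 * z' with hzdef
  set y : G := g * x0 with hydef
  -- the midpoint has radius at least r0, so it is far from some orbit point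
  obtain ⟨j, hj⟩ : ∃ j : ℕ, (r0 : ℕ) ≤ len hS (z⁻¹ * g ^ j) := by
    have h1 : r0 ≤ r z := Nat.sInf_le ⟨z, rfl⟩
    obtain ⟨v, hv, hveq⟩ := Finset.mem_image.mp (Finset.max'_mem _ (hrne z))
    exact ⟨v, hveq ▸ h1⟩
  set p : G := g ^ j with hpdef
  -- distance estimates
  have hxy : wordDist (S : Set G) x0 y = (n : ℝ) := by
    rw [wordDist_eq hS, hndef, hcdef, mul_assoc]
  have hxz : wordDist (S : Set G) x0 z ≤ (k : ℝ) := by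
    rw [wordDist_eq hS, hzdef, inv_mul_cancel_left]
    exact_mod_cast hz1
  have hyz : wordDist (S : Set G) y z ≤ ((n - k : ℕ) : ℝ) := by
    rw [wordDist_eq hS]
    have h1 : y⁻¹ * z = (z'⁻¹ * c)⁻¹ := by
      rw [hzdef, hydef, hcdef]; group
    rw [h1]
    exact_mod_cast (len_inv_le hS _).trans hz2
  have hzp : (r0 : ℝ) ≤ wordDist (S : Set G) z p := by
    rw [wordDist_eq hS]; exact_mod_cast hj
  have hxp : wordDist (S : Set G) x0 p ≤ (r0 : ℝ) := by
    rw [wordDist_eq hS]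
    exact_mod_cast hx0 ▸ hr x0 j
  have hyp : wordDist (S : Set G) y p ≤ (r0 : ℝ) := by
    rw [wordDist_eq hS]
    have hg1 : g ^ (m - 1) = g⁻¹ := by
      have h2 : g ^ (m - 1) * g = 1 := by
        rw [← pow_succ]
        have h3 : m - 1 + 1 = m := by omega
        rw [h3, hmdef, pow_orderOf_eq_one]
      exact eq_inv_of_mul_eq_one_left h2
    have h1 : y⁻¹ * p = x0⁻¹ * g ^ (m - 1 + j) := by
      rw [hpdef, hydef, pow_add, hg1, mul_inv_rev, mul_assoc]
    rw [h1]
    exact_mod_cast hx0 ▸ hr x0 (m - 1 + j)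
  -- apply the four-point condition
  have key := h4 x0 y z p
  rw [hxy] at key
  have hmax : max (wordDist (S : Set G) x0 z + wordDist (S : Set G) y p)
      (wordDist (S : Set G) x0 p + wordDist (S : Set G) y z) ≤ (k : ℝ) + r0 := by
    have hak : (n - k : ℕ) ≤ k := by omega
    refine max_le (by linarith) ?_
    have : ((n - k : ℕ) : ℝ) ≤ (k : ℝ) := by exact_mod_cast hak
    linarith
  have hnk : (n : ℝ) ≤ (k : ℝ) + 2 * δ := by linarith
  have h1 : k + (n - k) = n := by omega
  have h2 : k ≤ (n - k) + 1 := by omega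
  have h1' : (k : ℝ) + ((n - k : ℕ) : ℝ) = n := by exact_mod_cast h1
  have h2' : (k : ℝ) ≤ ((n - k : ℕ) : ℝ) + 1 := by exact_mod_cast h2
  have hfin : (n : ℝ) ≤ 4 * δ + 1 := by linarith
  exact hfin

end Aux

/-- A residually finite word hyperbolic group has a torsion-free
subgroup of finite index. -/
theorem exists_torsionFree_finiteIndex_of_residuallyFinite_hyperbolic
    {G : Type*} [Group G]
    (hrf : ResiduallyFinite G) (hhyp : IsWordHyperbolic G) :
    ∃ H : Subgroup G, H.FiniteIndex ∧ (∀ g : H, g ≠ 1 → ¬IsOfFinOrder g) := by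
  classical
  obtain ⟨S, δ, hδ, hS, h4⟩ := hhyp
  set K : ℕ := ⌈4 * δ + 1⌉₊ with hK
  set T : Set G := {t : G | IsOfFinOrder t ∧ t ≠ 1 ∧ len hS t ≤ K} with hTdef
  have hT : T.Finite := (ball_finite hS K).subset fun t ht => ht.2.2
  choose! N hnorm hfi hnot using fun t (ht : t ∈ T) => hrf t ht.2.1
  refine ⟨⨅ t ∈ hT.toFinset, N t, Subgroup.finiteIndex_iInf' N
    (fun t ht => hfi t (hT.mem_toFinset.mp ht)), ?_⟩
  set H : Subgroup G := ⨅ t ∈ hT.toFinset, N t with hHdef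
  have hmemH : ∀ a : G, a ∈ H ↔ ∀ t ∈ T, a ∈ N t := by
    intro a
    simp [hHdef, Subgroup.mem_iInf, hT.mem_toFinset]
  intro h hne hfin
  -- push everything to `G`
  have hGfin : IsOfFinOrder (h : G) := H.subtype.isOfFinOrder hfin
  have hGne : (h : G) ≠ 1 := fun hc => hne (OneMemClass.coe_eq_one.mp hc)
  obtain ⟨x, hx⟩ := conj_bound hS hδ h4 hGfin
  set t : G := x⁻¹ * (h : G) * x with htdef
  have htT : t ∈ T := by
    refine ⟨?_, ?_, ?_⟩
    · have : t = (MulAut.conj x⁻¹) (h : G) := by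
        simp [htdef, MulAut.conj_apply, mul_assoc]
      rw [this]
      exact (MulAut.conj x⁻¹).toMonoidHom.isOfFinOrder hGfin
    · simp only [htdef, ne_eq]
      intro hcontr
      apply hGne
      have := congrArg (fun w => x * w * x⁻¹) hcontr
      simpa [mul_assoc] using this
    · have h1 : (len hS t : ℝ) ≤ (K : ℝ) := hx.trans (Nat.le_ceil _)
      exact_mod_cast h1
  have htH : t ∈ H := by
    rw [hmemH]
    intro s hs
    have hhs : (h : G) ∈ N s := (hmemH (h : G)).mp h.2 s hs
    have := (hnorm s hs).conj_mem (h : G) hhs x⁻¹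
    simpa [htdef, mul_assoc] using this
  exact hnot t htT ((hmemH t).mp htH t htT)
end

section
/- Let M be a connected finite 2-complex with torsion-free fundamental group G, let g be a shortest homotopically essential cellular loop in M, of length L, and fix a lift g̃ of g to the universal cover M̃. Let T̃ be the closed cellular neighborhood of radius R = ⌊(L−1)/4⌋ of g̃ in M̃. Then for every deck transformation h ∈ G not in the cyclic subgroup generated by g, the translate h·T̃ is disjoint from T̃. -/
/-! **Statement 3** (tube lemma).  We model the 1-skeleton of the universal cover
`M̃` of a connected finite 2-complex `M` by its vertex set `X`, carrying the path
metric `d` (unit edge lengths, `ℕ`-valued) on which the fundamental group `G`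
acts freely by isometries (the deck action).  A shortest homotopically essential
cellular loop of length `L` in `M` corresponds to a deck transformation `g ≠ 1`
together with an invariant cellular line `g̃ : ℤ → X` (the lift of the loop)
satisfying `g • g̃ n = g̃ (n + L)`, and minimality of `L` is the systole condition:
every nontrivial deck transformation moves every vertex by at least `L`. -/

theorem tube_translates_disjoint
    {G X : Type*} [Group G] [MulAction G X]
    -- `d` is the path metric on the 1-skeleton of the universal cover
    (d : X → X → ℕ)
    (hd_eq : ∀ x y, d x y = 0 ↔ x = y)
    (hd_symm : ∀ x y, d x y = d y x)
    (hd_tri : ∀ x y z, d x z ≤ d x y + d y z)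
    -- the deck action is free and isometric
    (hfree : ∀ (g : G) (x : X), g • x = x → g = 1)
    (hisom : ∀ (g : G) (x y : X), d (g • x) (g • y) = d x y)
    -- the fundamental group is torsion free
    (htf : ∀ g : G, g ≠ 1 → ¬IsOfFinOrder g)
    -- the shortest homotopically essential cellular loop, of length `L`
    (L : ℕ) (hL : 1 ≤ L) (g : G) (hg : g ≠ 1)
    (gt : ℤ → X)
    -- `gt` is a cellular path: consecutive vertices span an edge
    (hstep : ∀ n : ℤ, d (gt n) (gt (n + 1)) ≤ 1)
    -- `gt` is the `g`-periodic lift of the loop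
    (hper : ∀ n : ℤ, g • gt n = gt (n + L))
    -- minimality of `L`: no nontrivial deck transformation moves a vertex less
    (hsys : ∀ h : G, h ≠ 1 → ∀ x : X, L ≤ d x (h • x)) :
    -- the radius `⌊(L-1)/4⌋` cellular neighborhood of the lift is disjoint from
    -- its translates by deck transformations outside `⟨g⟩`
    ∀ h : G, h ∉ Subgroup.zpowers g →
      Disjoint ((fun x => h • x) '' {x : X | ∃ n : ℤ, d x (gt n) ≤ (L - 1) / 4})
        {x : X | ∃ n : ℤ, d x (gt n) ≤ (L - 1) / 4} := by

  intro h hh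
  rw [Set.disjoint_left]
  rintro x ⟨y, ⟨m, hym⟩, rfl⟩ ⟨n, hxn⟩
  set R : ℕ := (L - 1) / 4 with hR
  -- action of powers of `g` on the line
  have hinv : ∀ s : ℤ, g⁻¹ • gt s = gt (s - L) := by
    intro s
    have h1 := hper (s - L)
    have h2 : s - (L : ℤ) + L = s := by ring
    rw [h2] at h1
    rw [← h1, inv_smul_smul]
  have hpow : ∀ (k : ℤ) (j : ℤ), g ^ k • gt j = gt (j + k * L) := by
    intro k
    induction k using Int.induction_on with
    | zero => intro j; simp
    | succ i ih =>
      intro j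
      rw [zpow_add_one, mul_smul, hper, ih]
      congr 1
      ring
    | pred i ih =>
      intro j
      rw [zpow_sub_one, mul_smul, hinv, ih]
      congr 1
      ring
  -- distance along the line
  have hdnat : ∀ (a : ℤ) (k : ℕ), d (gt a) (gt (a + k)) ≤ k := by
    intro a k
    induction k with
    | zero => simp [Nat.le_zero, hd_eq]
    | succ i ih =>
      have ht := hd_tri (gt a) (gt (a + i)) (gt (a + (i + 1 : ℕ)))
      have hs := hstep (a + i)
      have he : a + ((i + 1 : ℕ) : ℤ) = a + (i : ℤ) + 1 := by push_cast; ring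
      rw [he] at ht ⊢
      omega
  have hdist : ∀ a b : ℤ, (d (gt a) (gt b) : ℤ) ≤ |b - a| := by
    intro a b
    rcases le_total a b with hab | hab
    · have hk : b = a + ((b - a).toNat : ℤ) := by omega
      have := hdnat a (b - a).toNat
      rw [← hk] at this
      calc (d (gt a) (gt b) : ℤ) ≤ ((b - a).toNat : ℤ) := by exact_mod_cast this
        _ = |b - a| := by rw [Int.toNat_of_nonneg (by omega)]; exact (abs_of_nonneg (by omega)).symm
    · have hk : a = b + ((a - b).toNat : ℤ) := by omega
      have := hdnat b (a - b).toNat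
      rw [← hk] at this
      rw [hd_symm]
      calc (d (gt b) (gt a) : ℤ) ≤ ((a - b).toNat : ℤ) := by exact_mod_cast this
        _ = |b - a| := by rw [Int.toNat_of_nonneg (by omega)]; rw [abs_sub_comm]; exact (abs_of_nonneg (by omega)).symm
  -- the two tubes come 2R-close
  have key : d (h • gt m) (gt n) ≤ 2 * R := by
    calc d (h • gt m) (gt n) ≤ d (h • gt m) (h • y) + d (h • y) (gt n) := hd_tri _ _ _
      _ = d (gt m) y + d (h • y) (gt n) := by rw [hisom]
      _ ≤ R + R := add_le_add (by rw [hd_symm]; exact hym) hxn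
      _ = 2 * R := by ring
  -- main estimate for every power shift
  have main : ∀ q' : ℤ, (L : ℤ) ≤ 2 * R + |n - q' * L - m| := by
    intro q'
    set w := g ^ (-q') * h with hw
    have hwne : w ≠ 1 := by
      intro hw1
      have h1 : g ^ (-q') = h⁻¹ := mul_eq_one_iff_eq_inv.mp hw1
      have h2 : h = g ^ q' := by
        have := congrArg (fun z => z⁻¹) h1
        simpa [zpow_neg] using this.symm
      exact hh (Subgroup.mem_zpowers_iff.mpr ⟨q', h2.symm⟩)
    have h1 : d (w • gt m) (gt (n - q' * L)) ≤ 2 * R := by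
      have hsm : w • gt m = g ^ (-q') • (h • gt m) := mul_smul _ _ _
      have h2 : g ^ (-q') • gt n = gt (n + (-q') * L) := hpow _ _
      have he : n - q' * L = n + (-q') * L := by ring
      rw [hsm, he, ← h2, hisom]
      exact key
    have h3 : (d (gt (n - q' * L)) (gt m) : ℤ) ≤ |n - q' * L - m| := by
      rw [abs_sub_comm]
      exact hdist _ _
    have h4 : (L : ℤ) ≤ d (gt m) (w • gt m) := by exact_mod_cast hsys w hwne (gt m)
    have h5 : d (gt m) (w • gt m) ≤ d (gt m) (gt (n - q' * L)) + d (gt (n - q' * L)) (w • gt m) := hd_tri _ _ _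
    have h6 : d (gt m) (gt (n - q' * L)) = d (gt (n - q' * L)) (gt m) := hd_symm _ _
    have h7 : d (gt (n - q' * L)) (w • gt m) = d (w • gt m) (gt (n - q' * L)) := hd_symm _ _
    have h1' : (d (w • gt m) (gt (n - q' * L)) : ℤ) ≤ 2 * R := by exact_mod_cast h1
    have h5' : (d (gt m) (w • gt m) : ℤ) ≤ (d (gt m) (gt (n - q' * L)) : ℤ) + (d (gt (n - q' * L)) (w • gt m) : ℤ) := by exact_mod_cast h5
    rw [h6] at h5'
    rw [h7] at h5'
    linarith
  -- arithmetic conclusion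
  have hLpos : (0 : ℤ) < L := by exact_mod_cast hL
  obtain ⟨q, r, hqr, hr0, hrL⟩ : ∃ q r : ℤ, n - m = q * L + r ∧ 0 ≤ r ∧ r < L :=
    ⟨(n - m) / L, (n - m) % L,
      by have := Int.mul_ediv_add_emod (n - m) (L : ℤ); linarith,
      Int.emod_nonneg _ (by omega), Int.emod_lt_of_pos _ hLpos⟩
  have e1 : n - q * L - m = r := by linarith
  have e2 : n - (q + 1) * L - m = r - L := by
    have hqL : (q + 1) * (L : ℤ) = q * L + L := by ring
    rw [hqL]
    linarith
  have m1 := main q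
  have m2 := main (q + 1)
  rw [e1, abs_of_nonneg hr0] at m1
  rw [e2, abs_of_nonpos (by omega)] at m2
  have h4R' : 4 * R ≤ L - 1 := by omega
  have h4R : 4 * (R : ℤ) ≤ (L : ℤ) - 1 := by omega
  linarith
end

section
/- Let G be a group, let F_* → ℤ and P_* → ℤ be two partial projective resolutions of the trivial ℤG-module ℤ of length 2, with F_i and P_i finitely generated free ℤG-modules with chosen bases in degrees 1 and 2. Suppose there is a constant C such that for every finite-index normal subgroup H of G, every coboundary η in Hom_{ℤH}(F_2, ℤ) has a primitive ω ∈ Hom_{ℤH}(F_1, ℤ) with dω = η and ‖ω‖ ≤ C‖η‖, where ‖·‖ is the ℓ¹-norm induced by the chosen bases (and coset representatives). Then there is a constant C′ such that the same uniform linear filling property holds for the resolution P_*. -/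
/-! Based finitely generated free `ℤG`-modules, modeled as `Fin k × G →₀ ℤ`
(with `ℤ`-basis the elements `g·eᵢ`) and the `G`-action by left translation;
`ℤG`-linear maps are `ℤ`-linear `G`-equivariant maps, and `ℤH`-functionals to the
trivial module `ℤ` are `ℤ`-linear `H`-invariant functionals. -/

/-- The free `ℤG`-module of rank `k` with its standard basis. -/
abbrev FreeMod (G : Type*) (k : ℕ) := Fin k × G →₀ ℤ

/-- The action of `g ∈ G` on the free module, permuting the `ℤ`-basis. -/
noncomputable def gsmul {G : Type*} [Group G] {k : ℕ} (g : G) :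
    FreeMod G k →ₗ[ℤ] FreeMod G k :=
  Finsupp.lmapDomain ℤ ℤ (fun p => (p.1, g * p.2))

/-- `ℤG`-linearity of a `ℤ`-linear map between based free `ℤG`-modules. -/
def IsEquivariant {G : Type*} [Group G] {k m : ℕ}
    (f : FreeMod G k →ₗ[ℤ] FreeMod G m) : Prop :=
  ∀ (g : G) (x : FreeMod G k), f (gsmul g x) = gsmul g (f x)

/-- `ℤH`-linearity of a functional into the trivial module `ℤ`. -/
def IsZHInvariant {G : Type*} [Group G] {k : ℕ} (H : Subgroup G)
    (φ : FreeMod G k →ₗ[ℤ] ℤ) : Prop :=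
  ∀ h ∈ H, ∀ x : FreeMod G k, φ (gsmul h x) = φ x

/-- The `ℓ¹`-norm on `Hom_{ℤH}(FreeMod G k, ℤ)` induced by the `ℤH`-basis coming
from the `ℤG`-basis and a choice of coset representatives (the norm does not
depend on this choice, for `H` normal). -/
noncomputable def l1Norm {G : Type*} [Group G] {k : ℕ} (H : Subgroup G)
    (φ : FreeMod G k →ₗ[ℤ] ℤ) : ℝ :=
  ∑ᶠ p : Fin k × (G ⧸ H), ((|φ (Finsupp.single (p.1, p.2.out) 1)| : ℤ) : ℝ)

section Aux

variable {G : Type*} [Group G]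

lemma gsmul_single {k : ℕ} (g : G) (i : Fin k) (g' : G) (n : ℤ) :
    gsmul g (Finsupp.single (i, g') n) = Finsupp.single (i, g * g') n := by
  simp [gsmul, Finsupp.lmapDomain_apply, Finsupp.mapDomain_single]

lemma gsmul_mul {k : ℕ} (g g' : G) (x : FreeMod G k) :
    gsmul (g * g') x = gsmul g (gsmul g' x) := by
  simp [gsmul, Finsupp.lmapDomain_apply, ← Finsupp.mapDomain_comp]
  congr 1
  ext p
  · rfl
  · simp [Function.comp, mul_assoc]

lemma gsmul_one {k : ℕ} (x : FreeMod G k) : gsmul (1 : G) x = x := by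
  simp [gsmul, Finsupp.lmapDomain_apply]
  convert Finsupp.mapDomain_id
  rfl

section Ext
variable {M : Type*} [AddCommGroup M] [Module ℤ M]

/-- equivariance with respect to an action `ρ` on the target. -/
def EquivTo {k : ℕ} (ρ : G → (M →ₗ[ℤ] M)) (f : FreeMod G k →ₗ[ℤ] M) : Prop :=
  ∀ (g : G) (x : FreeMod G k), f (gsmul g x) = ρ g (f x)

noncomputable def extendEquiv {k : ℕ} (ρ : G → (M →ₗ[ℤ] M)) (v : Fin k → M) :
    FreeMod G k →ₗ[ℤ] M :=
  Finsupp.lsum ℕ (fun p => LinearMap.toSpanSingleton ℤ M (ρ p.2 (v p.1)))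

lemma extendEquiv_single {k : ℕ} (ρ : G → (M →ₗ[ℤ] M)) (v : Fin k → M)
    (i : Fin k) (g : G) (n : ℤ) :
    extendEquiv ρ v (Finsupp.single (i, g) n) = n • ρ g (v i) := by
  rw [extendEquiv, Finsupp.lsum_apply,
    Finsupp.sum_single_index (by rw [map_zero]), LinearMap.toSpanSingleton_apply]
  exact int_smul_eq_zsmul _ n _

lemma eq_on_singles {k : ℕ} (f f' : FreeMod G k →ₗ[ℤ] M)
    (h : ∀ (i : Fin k) (g : G), f (Finsupp.single (i, g) 1) = f' (Finsupp.single (i, g) 1)) :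
    f = f' := by
  apply Finsupp.lhom_ext'
  intro p
  ext
  obtain ⟨i, g⟩ := p
  simpa using h i g

lemma eq_of_equivTo {k : ℕ} (ρ : G → (M →ₗ[ℤ] M)) (f f' : FreeMod G k →ₗ[ℤ] M)
    (hf : EquivTo ρ f) (hf' : EquivTo ρ f')
    (h : ∀ i : Fin k, f (Finsupp.single (i, 1) 1) = f' (Finsupp.single (i, 1) 1)) :
    f = f' := by
  apply eq_on_singles
  intro i g
  have e : (Finsupp.single ((i : Fin k), g) (1:ℤ)) = gsmul g (Finsupp.single (i, 1) 1) := by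
    rw [gsmul_single, mul_one]
  rw [e, hf g, hf' g, h i]

lemma extendEquiv_equiv {k : ℕ} (ρ : G → (M →ₗ[ℤ] M))
    (hρ : ∀ g g' x, ρ (g * g') x = ρ g (ρ g' x)) (v : Fin k → M) :
    EquivTo ρ (extendEquiv ρ v) := by
  intro g x
  induction x using Finsupp.induction with
  | zero => simp
  | single_add p n x _ _ ih =>
    obtain ⟨i, g'⟩ := p
    rw [map_add, map_add, map_add, ih, gsmul_single, extendEquiv_single,
      extendEquiv_single, hρ]
    simp

lemma lift_exists {k n : ℕ} (ρ : G → (M →ₗ[ℤ] M))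
    (hρ : ∀ g g' x, ρ (g * g') x = ρ g (ρ g' x))
    (T : FreeMod G n →ₗ[ℤ] M) (hT : EquivTo ρ T)
    (f : FreeMod G k →ₗ[ℤ] M) (hf : EquivTo ρ f)
    (hmem : ∀ i : Fin k, f (Finsupp.single (i, 1) 1) ∈ LinearMap.range T) :
    ∃ L : FreeMod G k →ₗ[ℤ] FreeMod G n, IsEquivariant L ∧ T ∘ₗ L = f := by
  choose u hu using hmem
  refine ⟨extendEquiv (fun g => gsmul g) u, ?_, ?_⟩
  · exact extendEquiv_equiv _ (fun g g' x => gsmul_mul g g' x) u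
  · apply eq_of_equivTo ρ _ _ ?_ hf
    · intro i
      simp only [LinearMap.comp_apply, extendEquiv_single, one_smul, gsmul_one, hu i]
    · intro g x
      simp only [LinearMap.comp_apply,
        extendEquiv_equiv (fun g => gsmul g) (fun g g' x => gsmul_mul g g' x) u g x]
      exact hT g _

lemma EquivTo.comp {k m : ℕ} (ρ : G → (M →ₗ[ℤ] M)) (f : FreeMod G m →ₗ[ℤ] M)
    (hf : EquivTo ρ f) (L : FreeMod G k →ₗ[ℤ] FreeMod G m) (hL : IsEquivariant L) :
    EquivTo ρ (f ∘ₗ L) := by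
  intro g x
  simp [LinearMap.comp_apply, hL g x, hf g]

end Ext

section Norm

lemma phi_single_smul {k : ℕ} (φ : FreeMod G k →ₗ[ℤ] ℤ) (a : Fin k × G) (n : ℤ) :
    φ (Finsupp.single a n) = n * φ (Finsupp.single a 1) := by
  have : (Finsupp.single a n : FreeMod G k) = n • Finsupp.single a 1 := by
    rw [Finsupp.smul_single, smul_eq_mul, mul_one]
  rw [this, map_smul, smul_eq_mul]

lemma inv_single {m : ℕ} {H : Subgroup G} (hN : H.Normal)
    {φ : FreeMod G m →ₗ[ℤ] ℤ} (hφ : IsZHInvariant H φ) (j : Fin m) (x : G) :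
    φ (Finsupp.single (j, x) 1)
      = φ (Finsupp.single (j, (QuotientGroup.mk x : G ⧸ H).out) 1) := by
  obtain ⟨h, hh⟩ := QuotientGroup.mk_out_eq_mul H x
  set q := (QuotientGroup.mk x : G ⧸ H).out with hq
  have hmem : q * (h : G)⁻¹ * q⁻¹ ∈ H := hN.conj_mem _ (H.inv_mem h.2) q
  have hx : x = (q * (h : G)⁻¹ * q⁻¹) * q := by
    rw [hh]
    group
  calc φ (Finsupp.single (j, x) 1)
      = φ (gsmul (q * (h : G)⁻¹ * q⁻¹) (Finsupp.single (j, q) 1)) := by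
        rw [gsmul_single]; rw [hx]
    _ = φ (Finsupp.single (j, q) 1) := hφ _ hmem _

/-- the ℓ¹-size of an equivariant map, measured on basis elements. -/
noncomputable def normConst {k m : ℕ} (ψ : FreeMod G k →ₗ[ℤ] FreeMod G m) : ℝ :=
  ∑ i : Fin k, ∑ p ∈ (ψ (Finsupp.single (i, 1) 1)).support,
    ((|ψ (Finsupp.single (i, 1) 1) p| : ℤ) : ℝ)

lemma normConst_nonneg {k m : ℕ} (ψ : FreeMod G k →ₗ[ℤ] FreeMod G m) :
    0 ≤ normConst ψ := by
  apply Finset.sum_nonneg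
  intro i _
  apply Finset.sum_nonneg
  intro p _
  positivity

lemma l1Norm_eq {k : ℕ} (H : Subgroup G) [Fintype (G ⧸ H)] (φ : FreeMod G k →ₗ[ℤ] ℤ) :
    l1Norm H φ = ∑ p : Fin k × (G ⧸ H),
      ((|φ (Finsupp.single (p.1, p.2.out) 1)| : ℤ) : ℝ) := by
  rw [l1Norm, finsum_eq_sum_of_fintype]

lemma l1Norm_nonneg {k : ℕ} (H : Subgroup G) (φ : FreeMod G k →ₗ[ℤ] ℤ) :
    0 ≤ l1Norm H φ := by
  apply finsum_nonneg
  intro p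
  positivity

lemma l1Norm_sub_le {k : ℕ} (H : Subgroup G) [Fintype (G ⧸ H)]
    (φ φ' : FreeMod G k →ₗ[ℤ] ℤ) :
    l1Norm H (φ - φ') ≤ l1Norm H φ + l1Norm H φ' := by
  rw [l1Norm_eq, l1Norm_eq, l1Norm_eq, ← Finset.sum_add_distrib]
  apply Finset.sum_le_sum
  intro p _
  rw [LinearMap.sub_apply]
  push_cast
  exact (abs_sub _ _).trans (by push_cast; rfl)

end Norm

section Key
variable {H : Subgroup G}

lemma phi_gsmul_expand {m : ℕ} (φ : FreeMod G m →ₗ[ℤ] ℤ) (g : G) (v : FreeMod G m) :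
    φ (gsmul g v) = ∑ p ∈ v.support, v p * φ (Finsupp.single (p.1, g * p.2) 1) := by
  rw [gsmul, Finsupp.lmapDomain_apply, Finsupp.mapDomain, map_finsuppSum, Finsupp.sum]
  exact Finset.sum_congr rfl (fun p _ => phi_single_smul φ _ _)

lemma qsum_translate (hN : H.Normal) [Fintype (G ⧸ H)] (f : G ⧸ H → ℝ) (g' : G) :
    ∑ c : G ⧸ H, f (QuotientGroup.mk (c.out * g')) = ∑ q : G ⧸ H, f q := by
  have hinj : Function.Injective
      (fun c : G ⧸ H => (QuotientGroup.mk (c.out * g') : G ⧸ H)) := by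
    intro c₁ c₂ hcc
    simp only [QuotientGroup.eq] at hcc
    have h1 : (c₁.out * g')⁻¹ * (c₂.out * g') = g'⁻¹ * (c₁.out⁻¹ * c₂.out) * g' := by
      group
    rw [h1] at hcc
    have h2 : c₁.out⁻¹ * c₂.out ∈ H := by
      have := hN.conj_mem _ hcc g'
      simpa [mul_assoc] using this
    have h3 : (QuotientGroup.mk c₁.out : G ⧸ H) = QuotientGroup.mk c₂.out :=
      QuotientGroup.eq.mpr h2
    rwa [QuotientGroup.out_eq', QuotientGroup.out_eq'] at h3
  exact Fintype.sum_bijective _ (Finite.injective_iff_bijective.mp hinj) _ _ (fun c => rfl)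

lemma row_le_l1Norm {m : ℕ} [Fintype (G ⧸ H)] (φ : FreeMod G m →ₗ[ℤ] ℤ) (j : Fin m) :
    ∑ q : G ⧸ H, ((|φ (Finsupp.single (j, q.out) 1)| : ℤ) : ℝ) ≤ l1Norm H φ := by
  rw [l1Norm_eq, Fintype.sum_prod_type]
  exact Finset.single_le_sum
    (f := fun j => ∑ q : G ⧸ H, ((|φ (Finsupp.single (j, q.out) 1)| : ℤ) : ℝ))
    (fun j _ => Finset.sum_nonneg fun q _ => by positivity) (Finset.mem_univ j)

lemma l1Norm_comp_le {k m : ℕ} (hN : H.Normal) [Fintype (G ⧸ H)]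
    (φ : FreeMod G m →ₗ[ℤ] ℤ) (hφ : IsZHInvariant H φ)
    (ψ : FreeMod G k →ₗ[ℤ] FreeMod G m) (hψ : IsEquivariant ψ) :
    l1Norm H (φ ∘ₗ ψ) ≤ normConst ψ * l1Norm H φ := by
  set w : Fin k → FreeMod G m := fun i => ψ (Finsupp.single (i, 1) 1) with hw
  -- pointwise bound
  have step2 : ∀ (i : Fin k) (g : G),
      ((|φ (ψ (Finsupp.single (i, g) 1))| : ℤ) : ℝ) ≤
        ∑ p ∈ (w i).support, ((|w i p| : ℤ) : ℝ) *
          ((|φ (Finsupp.single (p.1, (QuotientGroup.mk (g * p.2) : G ⧸ H).out) 1)| : ℤ) : ℝ) := by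
    intro i g
    have e1 : (Finsupp.single ((i : Fin k), g) (1:ℤ)) = gsmul g (Finsupp.single (i, 1) 1) := by
      rw [gsmul_single, mul_one]
    rw [e1, hψ g, phi_gsmul_expand]
    calc ((|∑ p ∈ (w i).support, w i p * φ (Finsupp.single (p.1, g * p.2) 1)| : ℤ) : ℝ)
        ≤ ∑ p ∈ (w i).support, ((|w i p * φ (Finsupp.single (p.1, g * p.2) 1)| : ℤ) : ℝ) := by
          push_cast
          exact Finset.abs_sum_le_sum_abs _ _
      _ = ∑ p ∈ (w i).support, ((|w i p| : ℤ) : ℝ) *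
            ((|φ (Finsupp.single (p.1, (QuotientGroup.mk (g * p.2) : G ⧸ H).out) 1)| : ℤ) : ℝ) := by
          apply Finset.sum_congr rfl
          intro p _
          rw [abs_mul, inv_single hN hφ]
          push_cast
          ring
  -- assemble
  rw [l1Norm_eq, Fintype.sum_prod_type]
  have target : normConst ψ * l1Norm H φ
      = ∑ i : Fin k, ∑ p ∈ (w i).support, ((|w i p| : ℤ) : ℝ) * l1Norm H φ := by
    rw [normConst, Finset.sum_mul]
    exact Finset.sum_congr rfl (fun i _ => by rw [Finset.sum_mul])
  rw [target]
  apply Finset.sum_le_sum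
  intro i _
  calc ∑ c : G ⧸ H, ((|(φ ∘ₗ ψ) (Finsupp.single (i, c.out) 1)| : ℤ) : ℝ)
      ≤ ∑ c : G ⧸ H, ∑ p ∈ (w i).support, ((|w i p| : ℤ) : ℝ) *
          ((|φ (Finsupp.single (p.1, (QuotientGroup.mk (c.out * p.2) : G ⧸ H).out) 1)| : ℤ) : ℝ) :=
        Finset.sum_le_sum (fun c _ => step2 i c.out)
    _ = ∑ p ∈ (w i).support, ∑ c : G ⧸ H, ((|w i p| : ℤ) : ℝ) *
          ((|φ (Finsupp.single (p.1, (QuotientGroup.mk (c.out * p.2) : G ⧸ H).out) 1)| : ℤ) : ℝ) :=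
        Finset.sum_comm
    _ = ∑ p ∈ (w i).support, ((|w i p| : ℤ) : ℝ) *
          ∑ c : G ⧸ H, ((|φ (Finsupp.single (p.1, (QuotientGroup.mk (c.out * p.2) : G ⧸ H).out) 1)| : ℤ) : ℝ) := by
        exact Finset.sum_congr rfl (fun p _ => by rw [Finset.mul_sum])
    _ = ∑ p ∈ (w i).support, ((|w i p| : ℤ) : ℝ) *
          ∑ q : G ⧸ H, ((|φ (Finsupp.single (p.1, q.out) 1)| : ℤ) : ℝ) := by
        apply Finset.sum_congr rfl
        intro p _
        congr 1
        exact qsum_translate hN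
          (fun q => ((|φ (Finsupp.single (p.1, q.out) 1)| : ℤ) : ℝ)) p.2
    _ ≤ ∑ p ∈ (w i).support, ((|w i p| : ℤ) : ℝ) * l1Norm H φ :=
        Finset.sum_le_sum (fun p _ => mul_le_mul_of_nonneg_left (row_le_l1Norm φ p.1)
          (by positivity))

end Key

section Helpers

lemma IsEquivariant.comp' {a b c : ℕ} {f : FreeMod G b →ₗ[ℤ] FreeMod G c}
    {g : FreeMod G a →ₗ[ℤ] FreeMod G b} (hf : IsEquivariant f) (hg : IsEquivariant g) :
    IsEquivariant (f ∘ₗ g) := by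
  intro x y
  simp [LinearMap.comp_apply, hg x, hf x]

lemma IsEquivariant.sub' {a b : ℕ} {f g : FreeMod G a →ₗ[ℤ] FreeMod G b}
    (hf : IsEquivariant f) (hg : IsEquivariant g) : IsEquivariant (f - g) := by
  intro x y
  simp [LinearMap.sub_apply, hf x, hg x, map_sub]

lemma IsEquivariant.id' {a : ℕ} : IsEquivariant (LinearMap.id : FreeMod G a →ₗ[ℤ] FreeMod G a) :=
  fun _ _ => rfl

lemma IsZHInvariant.comp' {a b : ℕ} {H : Subgroup G} {φ : FreeMod G b →ₗ[ℤ] ℤ}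
    {ψ : FreeMod G a →ₗ[ℤ] FreeMod G b} (hφ : IsZHInvariant H φ) (hψ : IsEquivariant ψ) :
    IsZHInvariant H (φ ∘ₗ ψ) := by
  intro h hh x
  simp [LinearMap.comp_apply, hψ h, hφ h hh]

lemma IsZHInvariant.sub' {a : ℕ} {H : Subgroup G} {φ φ' : FreeMod G a →ₗ[ℤ] ℤ}
    (hφ : IsZHInvariant H φ) (hφ' : IsZHInvariant H φ') : IsZHInvariant H (φ - φ') := by
  intro h hh x
  simp [LinearMap.sub_apply, hφ h hh, hφ' h hh]

end Helpers


end Aux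

/-- A length-two partial resolution `F₂ → F₁ → F₀ → ℤ → 0` of the trivial
`ℤG`-module `ℤ` by based finitely generated free `ℤG`-modules: the maps are
`ℤG`-linear, the augmentation is onto, and the sequence is exact at `F₀`, at `F₁`
and at `ℤ`. -/
structure IsPartialFreeResolution {G : Type*} [Group G] {k₀ k₁ k₂ : ℕ}
    (d₂ : FreeMod G k₂ →ₗ[ℤ] FreeMod G k₁) (d₁ : FreeMod G k₁ →ₗ[ℤ] FreeMod G k₀)
    (ε : FreeMod G k₀ →ₗ[ℤ] ℤ) : Prop where
  equiv_d₂ : IsEquivariant d₂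
  equiv_d₁ : IsEquivariant d₁
  inv_ε : IsZHInvariant (⊤ : Subgroup G) ε
  surj_ε : Function.Surjective ε
  exact_F₀ : LinearMap.ker ε = LinearMap.range d₁
  exact_F₁ : LinearMap.ker d₁ = LinearMap.range d₂

/-- Uniform linear bound on primitives of coboundaries in
`Hom_{ℤH}(F₂,ℤ)` over all finite-index normal subgroups `H ≤ G`. -/
def UniformFilling {G : Type*} [Group G] {k₀ k₁ k₂ : ℕ}
    (d₂ : FreeMod G k₂ →ₗ[ℤ] FreeMod G k₁) (_d₁ : FreeMod G k₁ →ₗ[ℤ] FreeMod G k₀)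
    (C : ℝ) : Prop :=
  ∀ (H : Subgroup G), H.Normal → H.FiniteIndex →
    ∀ η : FreeMod G k₂ →ₗ[ℤ] ℤ, IsZHInvariant H η →
      (∃ ω₀ : FreeMod G k₁ →ₗ[ℤ] ℤ, IsZHInvariant H ω₀ ∧ η = ω₀ ∘ₗ d₂) →
      ∃ ω : FreeMod G k₁ →ₗ[ℤ] ℤ, IsZHInvariant H ω ∧ η = ω ∘ₗ d₂ ∧
        l1Norm H ω ≤ C * l1Norm H η

/-- If a length-two based free partial resolution `F_*` of `ℤ`
over `ℤG` satisfies the uniform linear filling property for coboundaries in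
`Hom_{ℤH}(F₂,ℤ)` (uniformly over all finite-index normal subgroups `H ≤ G`), then
so does any other such partial resolution `P_*`, with a possibly different
constant. -/
theorem uniform_filling_independent_of_resolution
    {G : Type*} [Group G] {k₀ k₁ k₂ m₀ m₁ m₂ : ℕ}
    (dF₂ : FreeMod G k₂ →ₗ[ℤ] FreeMod G k₁) (dF₁ : FreeMod G k₁ →ₗ[ℤ] FreeMod G k₀)
    (εF : FreeMod G k₀ →ₗ[ℤ] ℤ)
    (dP₂ : FreeMod G m₂ →ₗ[ℤ] FreeMod G m₁) (dP₁ : FreeMod G m₁ →ₗ[ℤ] FreeMod G m₀)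
    (εP : FreeMod G m₀ →ₗ[ℤ] ℤ)
    (hF : IsPartialFreeResolution dF₂ dF₁ εF)
    (hP : IsPartialFreeResolution dP₂ dP₁ εP)
    (C : ℝ) (hC : UniformFilling dF₂ dF₁ C) :
    ∃ C' : ℝ, UniformFilling dP₂ dP₁ C' := by
  classical
  -- composites vanish
  have hεPd : ∀ x, εP (dP₁ x) = 0 := fun x => by
    have : dP₁ x ∈ LinearMap.ker εP := hP.exact_F₀ ▸ ⟨x, rfl⟩
    exact this
  have hεFd : ∀ x, εF (dF₁ x) = 0 := fun x => by
    have : dF₁ x ∈ LinearMap.ker εF := hF.exact_F₀ ▸ ⟨x, rfl⟩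
    exact this
  have hdPd : ∀ x, dP₁ (dP₂ x) = 0 := fun x => by
    have : dP₂ x ∈ LinearMap.ker dP₁ := hP.exact_F₁ ▸ ⟨x, rfl⟩
    exact this
  have hdFd : ∀ x, dF₁ (dF₂ x) = 0 := fun x => by
    have : dF₂ x ∈ LinearMap.ker dF₁ := hF.exact_F₁ ▸ ⟨x, rfl⟩
    exact this
  have hρtriv : ∀ (g g' : G) (x : ℤ), (LinearMap.id : ℤ →ₗ[ℤ] ℤ) x = x := fun _ _ _ => rfl
  -- a₀ : P₀ → F₀ with εF ∘ a₀ = εP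
  obtain ⟨a₀, ha₀e, ha₀⟩ :=
    lift_exists (fun _ : G => (LinearMap.id : ℤ →ₗ[ℤ] ℤ)) (fun _ _ _ => rfl)
      εF (fun g x => hF.inv_ε g trivial x)
      εP (fun g x => hP.inv_ε g trivial x)
      (fun i => hF.surj_ε (εP (Finsupp.single (i, 1) 1)))
  -- b₀ : F₀ → P₀ with εP ∘ b₀ = εF
  obtain ⟨b₀, hb₀e, hb₀⟩ :=
    lift_exists (fun _ : G => (LinearMap.id : ℤ →ₗ[ℤ] ℤ)) (fun _ _ _ => rfl)
      εP (fun g x => hP.inv_ε g trivial x)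
      εF (fun g x => hF.inv_ε g trivial x)
      (fun i => hP.surj_ε (εF (Finsupp.single (i, 1) 1)))
  -- a₁ : P₁ → F₁ with dF₁ ∘ a₁ = a₀ ∘ dP₁
  obtain ⟨a₁, ha₁e, ha₁⟩ :=
    lift_exists (fun g : G => (gsmul g : FreeMod G k₀ →ₗ[ℤ] FreeMod G k₀))
      (fun g g' x => gsmul_mul g g' x)
      dF₁ hF.equiv_d₁ (a₀ ∘ₗ dP₁) (ha₀e.comp' hP.equiv_d₁)
      (fun i => by
        rw [← hF.exact_F₀]
        show εF ((a₀ ∘ₗ dP₁) (Finsupp.single (i, 1) 1)) = 0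
        have := LinearMap.congr_fun ha₀ (dP₁ (Finsupp.single (i, 1) 1))
        simp only [LinearMap.comp_apply] at this ⊢
        rw [this, hεPd])
  -- b₁ : F₁ → P₁ with dP₁ ∘ b₁ = b₀ ∘ dF₁
  obtain ⟨b₁, hb₁e, hb₁⟩ :=
    lift_exists (fun g : G => (gsmul g : FreeMod G m₀ →ₗ[ℤ] FreeMod G m₀))
      (fun g g' x => gsmul_mul g g' x)
      dP₁ hP.equiv_d₁ (b₀ ∘ₗ dF₁) (hb₀e.comp' hF.equiv_d₁)
      (fun i => by
        rw [← hP.exact_F₀]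
        show εP ((b₀ ∘ₗ dF₁) (Finsupp.single (i, 1) 1)) = 0
        have := LinearMap.congr_fun hb₀ (dF₁ (Finsupp.single (i, 1) 1))
        simp only [LinearMap.comp_apply] at this ⊢
        rw [this, hεFd])
  -- a₂ : P₂ → F₂ with dF₂ ∘ a₂ = a₁ ∘ dP₂
  obtain ⟨a₂, ha₂e, ha₂⟩ :=
    lift_exists (fun g : G => (gsmul g : FreeMod G k₁ →ₗ[ℤ] FreeMod G k₁))
      (fun g g' x => gsmul_mul g g' x)
      dF₂ hF.equiv_d₂ (a₁ ∘ₗ dP₂) (ha₁e.comp' hP.equiv_d₂)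
      (fun i => by
        rw [← hF.exact_F₁]
        show dF₁ ((a₁ ∘ₗ dP₂) (Finsupp.single (i, 1) 1)) = 0
        have := LinearMap.congr_fun ha₁ (dP₂ (Finsupp.single (i, 1) 1))
        simp only [LinearMap.comp_apply] at this ⊢
        rw [this]
        have h2 := LinearMap.congr_fun ha₀ (dP₁ (dP₂ (Finsupp.single (i, 1) 1)))
        simp only [LinearMap.comp_apply] at h2
        rw [hdPd, map_zero])
  -- b₂ : F₂ → P₂ with dP₂ ∘ b₂ = b₁ ∘ dF₂
  obtain ⟨b₂, hb₂e, hb₂⟩ :=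
    lift_exists (fun g : G => (gsmul g : FreeMod G m₁ →ₗ[ℤ] FreeMod G m₁))
      (fun g g' x => gsmul_mul g g' x)
      dP₂ hP.equiv_d₂ (b₁ ∘ₗ dF₂) (hb₁e.comp' hF.equiv_d₂)
      (fun i => by
        rw [← hP.exact_F₁]
        show dP₁ ((b₁ ∘ₗ dF₂) (Finsupp.single (i, 1) 1)) = 0
        have := LinearMap.congr_fun hb₁ (dF₂ (Finsupp.single (i, 1) 1))
        simp only [LinearMap.comp_apply] at this ⊢
        rw [this, hdFd, map_zero])
  -- s₀ : P₀ → P₁ with dP₁ ∘ s₀ = b₀ ∘ a₀ - id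
  obtain ⟨s₀, hs₀e, hs₀⟩ :=
    lift_exists (fun g : G => (gsmul g : FreeMod G m₀ →ₗ[ℤ] FreeMod G m₀))
      (fun g g' x => gsmul_mul g g' x)
      dP₁ hP.equiv_d₁ (b₀ ∘ₗ a₀ - LinearMap.id) ((hb₀e.comp' ha₀e).sub' IsEquivariant.id')
      (fun i => by
        rw [← hP.exact_F₀, LinearMap.mem_ker]
        simp only [LinearMap.sub_apply, LinearMap.comp_apply, LinearMap.id_apply, map_sub]
        have h1 := LinearMap.congr_fun hb₀ (a₀ (Finsupp.single (i, 1) 1))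
        have h2 := LinearMap.congr_fun ha₀ (Finsupp.single (i, 1) 1)
        simp only [LinearMap.comp_apply] at h1 h2
        rw [h1, h2, sub_self])
  -- s₁ : P₁ → P₂ with dP₂ ∘ s₁ = b₁ ∘ a₁ - id - s₀ ∘ dP₁
  obtain ⟨s₁, hs₁e, hs₁⟩ :=
    lift_exists (fun g : G => (gsmul g : FreeMod G m₁ →ₗ[ℤ] FreeMod G m₁))
      (fun g g' x => gsmul_mul g g' x)
      dP₂ hP.equiv_d₂ (b₁ ∘ₗ a₁ - LinearMap.id - s₀ ∘ₗ dP₁)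
      (((hb₁e.comp' ha₁e).sub' IsEquivariant.id').sub' (hs₀e.comp' hP.equiv_d₁))
      (fun i => by
        rw [← hP.exact_F₁, LinearMap.mem_ker]
        simp only [LinearMap.sub_apply, LinearMap.comp_apply, LinearMap.id_apply, map_sub]
        set e : FreeMod G m₁ := Finsupp.single (i, 1) 1
        have h1 := LinearMap.congr_fun hb₁ (a₁ e)
        have h2 := LinearMap.congr_fun ha₁ e
        have h3 := LinearMap.congr_fun hs₀ (dP₁ e)
        simp only [LinearMap.comp_apply, LinearMap.sub_apply, LinearMap.id_apply] at h1 h2 h3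
        rw [h1, h2, h3]
        abel)
  refine ⟨normConst a₁ * (|C| * normConst b₂) + normConst s₁, ?_⟩
  intro H hN hFI η hηinv ⟨ω₀, hω₀inv, hηd⟩
  haveI := hFI
  haveI : Finite (G ⧸ H) := H.finite_quotient_of_finiteIndex
  haveI := Fintype.ofFinite (G ⧸ H)
  -- pull back η to F
  set ηF : FreeMod G k₂ →ₗ[ℤ] ℤ := η ∘ₗ b₂ with hηF
  have hηFinv : IsZHInvariant H ηF := hηinv.comp' hb₂e
  have hηFcob : ηF = (ω₀ ∘ₗ b₁) ∘ₗ dF₂ := by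
    rw [hηF, hηd, LinearMap.comp_assoc, hb₂, ← LinearMap.comp_assoc]
  obtain ⟨ωF, hωFinv, hωFeq, hωFnorm⟩ :=
    hC H hN hFI ηF hηFinv ⟨ω₀ ∘ₗ b₁, hω₀inv.comp' hb₁e, hηFcob⟩
  refine ⟨ωF ∘ₗ a₁ - η ∘ₗ s₁, (hωFinv.comp' ha₁e).sub' (hηinv.comp' hs₁e), ?_, ?_⟩
  · -- η = ω ∘ dP₂
    refine LinearMap.ext fun x => ?_
    have key : dP₂ (b₂ (a₂ x) - s₁ (dP₂ x) - x) = 0 := by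
      have h1 := LinearMap.congr_fun hb₂ (a₂ x)
      have h2 := LinearMap.congr_fun ha₂ x
      have h3 := LinearMap.congr_fun hs₁ (dP₂ x)
      simp only [LinearMap.comp_apply, LinearMap.sub_apply, LinearMap.id_apply] at h1 h2 h3
      rw [map_sub, map_sub, h1, h2, h3, hdPd, map_zero]
      abel
    have hz : η (b₂ (a₂ x) - s₁ (dP₂ x) - x) = 0 := by
      rw [hηd]
      simp only [LinearMap.comp_apply, key, map_zero]
    simp only [map_sub] at hz
    have h2 := LinearMap.congr_fun ha₂ x
    simp only [LinearMap.comp_apply] at h2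
    have hωF := LinearMap.congr_fun hωFeq (a₂ x)
    simp only [LinearMap.comp_apply, hηF] at hωF
    simp only [LinearMap.comp_apply, LinearMap.sub_apply]
    rw [← h2, ← hωF]
    linarith [hz]
  · -- norm estimate
    have h4 : l1Norm H (ωF ∘ₗ a₁) ≤ normConst a₁ * l1Norm H ωF :=
      l1Norm_comp_le hN ωF hωFinv a₁ ha₁e
    have h5 : l1Norm H (η ∘ₗ s₁) ≤ normConst s₁ * l1Norm H η :=
      l1Norm_comp_le hN η hηinv s₁ hs₁e
    have h7 : l1Norm H ηF ≤ normConst b₂ * l1Norm H η :=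
      l1Norm_comp_le hN η hηinv b₂ hb₂e
    have hx : 0 ≤ l1Norm H ηF := l1Norm_nonneg H ηF
    have hy : 0 ≤ l1Norm H η := l1Norm_nonneg H η
    have hKa := normConst_nonneg a₁
    have hKb := normConst_nonneg b₂
    have hKs := normConst_nonneg s₁
    have htri : l1Norm H (ωF ∘ₗ a₁ - η ∘ₗ s₁) ≤ l1Norm H (ωF ∘ₗ a₁) + l1Norm H (η ∘ₗ s₁) :=
      l1Norm_sub_le H _ _
    have hstep : l1Norm H ωF ≤ |C| * (normConst b₂ * l1Norm H η) := by
      calc l1Norm H ωF ≤ C * l1Norm H ηF := hωFnorm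
        _ ≤ |C| * l1Norm H ηF := mul_le_mul_of_nonneg_right (le_abs_self C) hx
        _ ≤ |C| * (normConst b₂ * l1Norm H η) :=
            mul_le_mul_of_nonneg_left h7 (abs_nonneg C)
    calc l1Norm H (ωF ∘ₗ a₁ - η ∘ₗ s₁)
        ≤ l1Norm H (ωF ∘ₗ a₁) + l1Norm H (η ∘ₗ s₁) := htri
      _ ≤ normConst a₁ * l1Norm H ωF + normConst s₁ * l1Norm H η := add_le_add h4 h5
      _ ≤ normConst a₁ * (|C| * (normConst b₂ * l1Norm H η)) + normConst s₁ * l1Norm H η :=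
          add_le_add (mul_le_mul_of_nonneg_left hstep hKa) le_rfl
      _ = (normConst a₁ * (|C| * normConst b₂) + normConst s₁) * l1Norm H η := by ring
end
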